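/- Let X₁,…,Xₙ be independent nonnegative random variables and T ≥ 0. Suppose each P(Xᵢ ≥ T) < g for some g ∈ (0,1], ∑ᵢ P(Xᵢ ≥ T) < b for some b > 0, and (1-g)^{1/g} = (1-h)^{1/b} for some h ∈ [0,1). Then P(∃ i, Xᵢ ≥ T) ≤ h. -/

import Mathlib

open MeasureTheory

lemma aux_real {n : ℕ} (q : Fin n → ℝ) (hq0 : ∀ i, 0 ≤ q i)
    (g b h : ℝ) (hg0 : 0 < g) (hg1 : g < 1) (hb : 0 < b)
    (hh1 : h < 1)
    (hlt : ∀ i, q i < g) (hsum : ∑ i, q i < b)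
    (hgh : (1 - g) ^ (1 / g) = (1 - h) ^ (1 / b)) :
    1 - h ≤ ∏ i, (1 - q i) := by
  set L : ℝ := Real.log (1 - g) / g with hL
  have h1g : 0 < 1 - g := by linarith
  have hlogneg : Real.log (1 - g) < 0 := Real.log_neg h1g (by linarith)
  have hLneg : L ≤ 0 := div_nonpos_of_nonpos_of_nonneg hlogneg.le hg0.le
  -- step 1: pointwise
  have step1 : ∀ i, Real.exp (q i * L) ≤ 1 - q i := by
    intro i
    have ha1 : (0:ℝ) ≤ 1 - q i / g := by
      have : q i / g ≤ 1 := (div_le_one hg0).mpr (hlt i).le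
      linarith
    have ha2 : (0:ℝ) ≤ q i / g := div_nonneg (hq0 i) hg0.le
    have ha3 : (1 - q i / g) + q i / g = 1 := by ring
    have hconv := convexOn_exp.2 (Set.mem_univ (0:ℝ)) (Set.mem_univ (g * L)) ha1 ha2 ha3
    have hgl : Real.exp (g * L) = 1 - g := by
      rw [hL]; rw [mul_div_cancel₀ _ hg0.ne', Real.exp_log h1g]
    have harg : (1 - q i / g) • (0:ℝ) + (q i / g) • (g * L) = q i * L := by
      field_simp
      rw [smul_eq_mul, smul_eq_mul, mul_zero, zero_add, ← mul_assoc, div_mul_cancel₀ _ hg0.ne']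
    rw [harg] at hconv
    calc Real.exp (q i * L) ≤ (1 - q i / g) * Real.exp 0 + (q i / g) * Real.exp (g * L) := hconv
      _ = 1 - q i := by
          rw [Real.exp_zero, hgl]; field_simp; ring
  -- step 2
  have step2 : Real.exp ((∑ i, q i) * L) ≤ ∏ i, (1 - q i) := by
    have : Real.exp ((∑ i, q i) * L) = ∏ i, Real.exp (q i * L) := by
      rw [← Real.exp_sum, ← Finset.sum_mul]
    rw [this]
    exact Finset.prod_le_prod (fun i _ => (Real.exp_pos _).le) (fun i _ => step1 i)
  -- step 3
  have step3 : Real.exp (b * L) ≤ Real.exp ((∑ i, q i) * L) := by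
    apply Real.exp_le_exp.mpr
    have := mul_le_mul_of_nonpos_right hsum.le hLneg
    linarith
  -- step 4
  have step4 : Real.exp (b * L) = 1 - h := by
    have hE : Real.exp L = (1 - g) ^ (1 / g) := by
      rw [Real.rpow_def_of_pos h1g, hL]; ring_nf
    have : Real.exp (b * L) = ((1 - g) ^ (1 / g)) ^ b := by
      rw [mul_comm, Real.exp_mul, hE]
    rw [this, hgh, ← Real.rpow_mul (by linarith : (0:ℝ) ≤ 1 - h),
      one_div, inv_mul_cancel₀ hb.ne', Real.rpow_one]
  linarith [step2, step3]

theorem stmt_8 {Ω : Type*} [MeasurableSpace Ω] (μ : Measure Ω) [IsProbabilityMeasure μ]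
    (n : ℕ) (X : Fin n → Ω → ℝ) (hX : ∀ i ω, 0 ≤ X i ω)
    (hmeas : ∀ i, Measurable (X i))
    (hindep : ProbabilityTheory.iIndepFun X μ)
    (T : ℝ) (hT : 0 ≤ T)
    (g b h : ℝ) (hg : g ∈ Set.Ioc (0:ℝ) 1) (hb : 0 < b) (hh : h ∈ Set.Ico (0:ℝ) 1)
    (hlt : ∀ i, (μ {ω | T ≤ X i ω}).toReal < g)
    (hsum : ∑ i, (μ {ω | T ≤ X i ω}).toReal < b)
    (hgh : (1 - g) ^ (1 / g) = (1 - h) ^ (1 / b)) :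
    (μ {ω | ∃ i, T ≤ X i ω}).toReal ≤ h := by
  obtain ⟨hg0, hg1⟩ := hg
  obtain ⟨hh0, hh1⟩ := hh
  -- g < 1
  have hg1' : g < 1 := by
    rcases lt_or_eq_of_le hg1 with h' | h'
    · exact h'
    · exfalso
      rw [h', sub_self] at hgh
      norm_num at hgh
      have : (0:ℝ) < (1 - h) ^ (1 / b) := Real.rpow_pos_of_pos (by linarith) _
      rw [one_div, ← hgh] at this
      exact lt_irrefl (0:ℝ) this
  -- events
  set A : Fin n → Set Ω := fun i => X i ⁻¹' Set.Ici T with hA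
  set B : Fin n → Set Ω := fun i => X i ⁻¹' Set.Iio T with hB
  have hAmeas : ∀ i, MeasurableSet (A i) := fun i => (hmeas i) measurableSet_Ici
  have hBmeas : ∀ i, MeasurableSet (B i) := fun i => (hmeas i) measurableSet_Iio
  have hBA : ∀ i, B i = (A i)ᶜ := by
    intro i; ext ω; simp [hA, hB, not_le]
  -- independence product
  have hprod : μ (⋂ i, B i) = ∏ i, μ (B i) := by
    have := hindep.measure_inter_preimage_eq_mul Finset.univ
      (sets := fun _ => Set.Iio T) (fun i _ => measurableSet_Iio)
    simpa using this
  -- union complement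
  have hU : {ω | ∃ i, T ≤ X i ω} = ⋃ i, A i := by
    ext ω; simp [hA]
  have hUc : (⋃ i, A i)ᶜ = ⋂ i, B i := by
    simp [Set.compl_iUnion, hBA]
  have hUmeas : MeasurableSet (⋃ i, A i) := MeasurableSet.iUnion (fun i => hAmeas i)
  have hcompl : μ (⋂ i, B i) = 1 - μ (⋃ i, A i) := by
    rw [← hUc]; exact prob_compl_eq_one_sub hUmeas
  -- to real
  have hle1 : μ (⋃ i, A i) ≤ 1 := prob_le_one
  have hfin : μ (⋃ i, A i) ≠ ⊤ := (lt_of_le_of_lt hle1 ENNReal.one_lt_top).ne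
  have htoReal : (∏ i, μ (B i)).toReal = 1 - (μ (⋃ i, A i)).toReal := by
    rw [← hprod, hcompl, ENNReal.toReal_sub_of_le hle1 ENNReal.one_ne_top, ENNReal.toReal_one]
  have hBtoReal : ∀ i, (μ (B i)).toReal = 1 - (μ (A i)).toReal := by
    intro i
    rw [hBA i, prob_compl_eq_one_sub (hAmeas i),
      ENNReal.toReal_sub_of_le prob_le_one ENNReal.one_ne_top, ENNReal.toReal_one]
  have hAq : ∀ i, {ω | T ≤ X i ω} = A i := by intro i; ext ω; simp [hA]
  have key : 1 - h ≤ ∏ i, (1 - (μ (A i)).toReal) := by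
    apply aux_real (fun i => (μ (A i)).toReal) (fun i => ENNReal.toReal_nonneg)
      g b h hg0 hg1' hb hh1
    · intro i; rw [← hAq i]; exact hlt i
    · calc ∑ i, (μ (A i)).toReal = ∑ i, (μ {ω | T ≤ X i ω}).toReal := by
            simp_rw [hAq]
        _ < b := hsum
    · exact hgh
  have hprodReal : (∏ i, μ (B i)).toReal = ∏ i, (1 - (μ (A i)).toReal) := by
    rw [ENNReal.toReal_prod]
    exact Finset.prod_congr rfl (fun i _ => hBtoReal i)
  rw [hU]
  have := htoReal
  rw [hprodReal] at this
  linarith [key, this]
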